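/- Let n > 0, K > 0, D ≥ 0, R₀ ≥ 0, c > 0, 0 < λ_min ≤ λ_max, and η = 2/((λ_min + λ_max)·n). Let S ⊆ ℝᵖ and let J, J' : ℝᵖ → M_{m×p}(ℝ) satisfy, for all θ, θ' ∈ S: ‖J(θ) − J(θ')‖_F ≤ K√n·‖θ − θ'‖₂, ‖J(θ)‖_F ≤ K√n, ‖J'(θ) − J'(θ')‖_F ≤ K√n·‖θ − θ'‖₂, and ‖J'(θ)‖_F ≤ K√n. Let θ₁, θ₂, θ̃₁, θ̃₂ : ℕ → S satisfy ‖θ₁(t) − θ₂(t)‖₂ ≤ D/√n and ‖θ̃₁(t) − θ̃₂(t)‖₂ ≤ D/√n for all t, and let r : ℕ → ℝᵐ satisfy ‖r(t)‖₂ ≤ R₀·e^{−c·t} for all t. Then for every T ∈ ℕ, ‖η · Σ_{t=0}^{T} (J'(θ̃₁(t))ᵀ·J(θ₁(t)) − J'(θ̃₂(t))ᵀ·J(θ₂(t)))·r(t)‖₂ ≤ 4·K²·D·R₀ / ((λ_min + λ_max)·√n·(1 − e^{−c})), which is O(n^{−1/2}) in the width n. -/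

import Mathlib

open Matrix

/-- Frobenius norm of a real matrix. -/
noncomputable def frobNorm {m p : ℕ} (A : Matrix (Fin m) (Fin p) ℝ) : ℝ :=
  Real.sqrt (∑ i, ∑ j, (A i j) ^ 2)

/-- ℓ²→ℓ² operator norm of a real matrix. -/
noncomputable def opNorm {m p : ℕ} (A : Matrix (Fin m) (Fin p) ℝ) : ℝ :=
  ‖LinearMap.toContinuousLinearMap (Matrix.toEuclideanLin A)‖

/-- Euclidean (ℓ²) norm of a vector in ℝᵖ. -/
noncomputable def eNorm {p : ℕ} (x : Fin p → ℝ) : ℝ :=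
  Real.sqrt (∑ i, (x i) ^ 2)

section helpers
attribute [local instance] Matrix.frobeniusNormedAddCommGroup

lemma frobNorm_eq {m p : ℕ} (A : Matrix (Fin m) (Fin p) ℝ) : frobNorm A = ‖A‖ := by
  rw [Matrix.frobenius_norm_def, ← Real.sqrt_eq_rpow]
  unfold frobNorm
  congr 1
  refine Finset.sum_congr rfl fun i _ => Finset.sum_congr rfl fun j _ => ?_
  rw [Real.rpow_two, Real.norm_eq_abs, sq_abs]

lemma eNorm_eq {p : ℕ} (x : Fin p → ℝ) :
    eNorm x = ‖(WithLp.equiv 2 (Fin p → ℝ)).symm x‖ := by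
  rw [EuclideanSpace.norm_eq]
  unfold eNorm
  congr 1
  refine Finset.sum_congr rfl fun i _ => ?_
  rw [Real.norm_eq_abs, sq_abs]; rfl

lemma eNorm_nonneg {p : ℕ} (x : Fin p → ℝ) : 0 ≤ eNorm x := Real.sqrt_nonneg _

lemma frobNorm_nonneg {m p : ℕ} (A : Matrix (Fin m) (Fin p) ℝ) : 0 ≤ frobNorm A :=
  Real.sqrt_nonneg _

lemma eNorm_mulVec_le {m p : ℕ} (A : Matrix (Fin m) (Fin p) ℝ) (x : Fin p → ℝ) :
    eNorm (A.mulVec x) ≤ frobNorm A * eNorm x := by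
  unfold eNorm frobNorm
  rw [← Real.sqrt_mul (by positivity)]
  apply Real.sqrt_le_sqrt
  rw [Finset.sum_mul]
  refine Finset.sum_le_sum fun i _ => ?_
  simpa [Matrix.mulVec, dotProduct] using
    Finset.sum_mul_sq_le_sq_mul_sq Finset.univ (A i) x

end helpers

section helpers2
attribute [local instance] Matrix.frobeniusNormedAddCommGroup

lemma frobNorm_add_le {m p : ℕ} (A B : Matrix (Fin m) (Fin p) ℝ) :
    frobNorm (A + B) ≤ frobNorm A + frobNorm B := by
  rw [frobNorm_eq, frobNorm_eq, frobNorm_eq]; exact norm_add_le A B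

lemma frobNorm_mul_le {a b c : ℕ} (A : Matrix (Fin a) (Fin b) ℝ) (B : Matrix (Fin b) (Fin c) ℝ) :
    frobNorm (A * B) ≤ frobNorm A * frobNorm B := by
  rw [frobNorm_eq, frobNorm_eq, frobNorm_eq]; exact Matrix.frobenius_norm_mul A B

lemma frobNorm_transpose' {a b : ℕ} (A : Matrix (Fin a) (Fin b) ℝ) :
    frobNorm Aᵀ = frobNorm A := by
  rw [frobNorm_eq, frobNorm_eq]; exact Matrix.frobenius_norm_transpose A

lemma eNorm_smul' {p : ℕ} (a : ℝ) (x : Fin p → ℝ) : eNorm (a • x) = |a| * eNorm x := by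
  rw [eNorm_eq, eNorm_eq]
  have : (WithLp.equiv 2 (Fin p → ℝ)).symm (a • x) =
      a • (WithLp.equiv 2 (Fin p → ℝ)).symm x := rfl
  rw [this, norm_smul, Real.norm_eq_abs]

lemma eNorm_sum_le {p : ℕ} (s : Finset ℕ) (f : ℕ → (Fin p → ℝ)) :
    eNorm (∑ t ∈ s, f t) ≤ ∑ t ∈ s, eNorm (f t) := by
  simp only [eNorm_eq]
  have : (WithLp.equiv 2 (Fin p → ℝ)).symm (∑ t ∈ s, f t) =
      ∑ t ∈ s, (WithLp.equiv 2 (Fin p → ℝ)).symm (f t) :=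
      map_sum (WithLp.addEquiv 2 (Fin p → ℝ)).symm _ _
  rw [this]
  exact norm_sum_le _ _

end helpers2

/-- Quantitative core of Theorem 1 ("no ripple effect"): with `J, J'` Jacobian maps that are
`K√n`-Lipschitz and `K√n`-bounded in Frobenius norm on `S`, trajectories `θ₁, θ₂` and
interpolation points `θ̃₁, θ̃₂` staying `D/√n`-close, residuals `‖r t‖₂ ≤ R₀ e^{−c t}`, and
learning rate `η = 2/((λmin + λmax) n)`, for every `T`,
`‖η Σ_{t=0}^{T} (J'(θ̃₁ t)ᵀ J(θ₁ t) − J'(θ̃₂ t)ᵀ J(θ₂ t)) (r t)‖₂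
  ≤ 4 K² D R₀ / ((λmin + λmax) √n (1 − e^{−c}))`. -/
theorem stmt_12 {m p : ℕ} (n K D R₀ c lmin lmax η : ℝ)
    (hn : 0 < n) (hK : 0 < K) (hD : 0 ≤ D) (hR₀ : 0 ≤ R₀) (hc : 0 < c)
    (hmin : 0 < lmin) (hle : lmin ≤ lmax) (hη : η = 2 / ((lmin + lmax) * n))
    (S : Set (Fin p → ℝ)) (J J' : (Fin p → ℝ) → Matrix (Fin m) (Fin p) ℝ)
    (hJ_lip : ∀ θ ∈ S, ∀ θ' ∈ S,
      frobNorm (J θ - J θ') ≤ K * Real.sqrt n * eNorm (θ - θ'))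
    (hJ_bdd : ∀ θ ∈ S, frobNorm (J θ) ≤ K * Real.sqrt n)
    (hJ'_lip : ∀ θ ∈ S, ∀ θ' ∈ S,
      frobNorm (J' θ - J' θ') ≤ K * Real.sqrt n * eNorm (θ - θ'))
    (hJ'_bdd : ∀ θ ∈ S, frobNorm (J' θ) ≤ K * Real.sqrt n)
    (θ₁ θ₂ θt₁ θt₂ : ℕ → (Fin p → ℝ))
    (hθ₁S : ∀ t, θ₁ t ∈ S) (hθ₂S : ∀ t, θ₂ t ∈ S)
    (hθt₁S : ∀ t, θt₁ t ∈ S) (hθt₂S : ∀ t, θt₂ t ∈ S)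
    (hclose : ∀ t, eNorm (θ₁ t - θ₂ t) ≤ D / Real.sqrt n)
    (htclose : ∀ t, eNorm (θt₁ t - θt₂ t) ≤ D / Real.sqrt n)
    (r : ℕ → (Fin p → ℝ)) (hr : ∀ t : ℕ, eNorm (r t) ≤ R₀ * Real.exp (-c * t)) :
    ∀ T : ℕ,
      eNorm (η • ∑ t ∈ Finset.range (T + 1),
          ((J' (θt₁ t))ᵀ * J (θ₁ t) - (J' (θt₂ t))ᵀ * J (θ₂ t)).mulVec (r t))
        ≤ 4 * K ^ 2 * D * R₀
          / ((lmin + lmax) * Real.sqrt n * (1 - Real.exp (-c))) := by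
  intro T
  have hsn : (0:ℝ) < Real.sqrt n := Real.sqrt_pos.mpr hn
  have hL : (0:ℝ) < lmin + lmax := by linarith
  have hηpos : 0 < η := by rw [hη]; positivity
  have hx0 : (0:ℝ) < Real.exp (-c) := Real.exp_pos _
  have hx1 : Real.exp (-c) < 1 := by
    rw [Real.exp_lt_one_iff]; linarith
  have hKn : 0 ≤ K * Real.sqrt n := by positivity
  -- per-term bound
  have hterm : ∀ t : ℕ,
      eNorm (((J' (θt₁ t))ᵀ * J (θ₁ t) - (J' (θt₂ t))ᵀ * J (θ₂ t)).mulVec (r t))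
        ≤ (2 * K ^ 2 * D * Real.sqrt n * R₀) * Real.exp (-c * t) := by
    intro t
    have h1 : frobNorm (J (θ₁ t) - J (θ₂ t)) ≤ K * D := by
      calc frobNorm (J (θ₁ t) - J (θ₂ t))
          ≤ K * Real.sqrt n * eNorm (θ₁ t - θ₂ t) := hJ_lip _ (hθ₁S t) _ (hθ₂S t)
        _ ≤ K * Real.sqrt n * (D / Real.sqrt n) := by gcongr; exact hclose t
        _ = K * D := by field_simp
    have h2 : frobNorm (J' (θt₁ t) - J' (θt₂ t)) ≤ K * D := by
      calc frobNorm (J' (θt₁ t) - J' (θt₂ t))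
          ≤ K * Real.sqrt n * eNorm (θt₁ t - θt₂ t) := hJ'_lip _ (hθt₁S t) _ (hθt₂S t)
        _ ≤ K * Real.sqrt n * (D / Real.sqrt n) := by gcongr; exact htclose t
        _ = K * D := by field_simp
    have hMt : (J' (θt₁ t))ᵀ * J (θ₁ t) - (J' (θt₂ t))ᵀ * J (θ₂ t)
        = (J' (θt₁ t))ᵀ * (J (θ₁ t) - J (θ₂ t))
          + (J' (θt₁ t) - J' (θt₂ t))ᵀ * J (θ₂ t) := by
      rw [Matrix.transpose_sub, Matrix.sub_mul, Matrix.mul_sub]; abel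
    have hfrob : frobNorm ((J' (θt₁ t))ᵀ * J (θ₁ t) - (J' (θt₂ t))ᵀ * J (θ₂ t))
        ≤ 2 * K ^ 2 * D * Real.sqrt n := by
      rw [hMt]
      calc frobNorm ((J' (θt₁ t))ᵀ * (J (θ₁ t) - J (θ₂ t))
              + (J' (θt₁ t) - J' (θt₂ t))ᵀ * J (θ₂ t))
          ≤ frobNorm ((J' (θt₁ t))ᵀ * (J (θ₁ t) - J (θ₂ t)))
            + frobNorm ((J' (θt₁ t) - J' (θt₂ t))ᵀ * J (θ₂ t)) := frobNorm_add_le _ _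
        _ ≤ frobNorm (J' (θt₁ t))ᵀ * frobNorm (J (θ₁ t) - J (θ₂ t))
            + frobNorm (J' (θt₁ t) - J' (θt₂ t))ᵀ * frobNorm (J (θ₂ t)) := by
            exact add_le_add (frobNorm_mul_le _ _) (frobNorm_mul_le _ _)
        _ = frobNorm (J' (θt₁ t)) * frobNorm (J (θ₁ t) - J (θ₂ t))
            + frobNorm (J' (θt₁ t) - J' (θt₂ t)) * frobNorm (J (θ₂ t)) := by
            rw [frobNorm_transpose', frobNorm_transpose']
        _ ≤ (K * Real.sqrt n) * (K * D) + (K * D) * (K * Real.sqrt n) := by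
            apply add_le_add
            · exact mul_le_mul (hJ'_bdd _ (hθt₁S t)) h1 (frobNorm_nonneg _) hKn
            · exact mul_le_mul h2 (hJ_bdd _ (hθ₂S t)) (frobNorm_nonneg _) (by positivity)
        _ = 2 * K ^ 2 * D * Real.sqrt n := by ring
    calc eNorm (((J' (θt₁ t))ᵀ * J (θ₁ t) - (J' (θt₂ t))ᵀ * J (θ₂ t)).mulVec (r t))
        ≤ frobNorm ((J' (θt₁ t))ᵀ * J (θ₁ t) - (J' (θt₂ t))ᵀ * J (θ₂ t)) * eNorm (r t) :=
          eNorm_mulVec_le _ _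
      _ ≤ (2 * K ^ 2 * D * Real.sqrt n) * (R₀ * Real.exp (-c * t)) :=
          mul_le_mul hfrob (hr t) (eNorm_nonneg _) (by positivity)
      _ = (2 * K ^ 2 * D * Real.sqrt n * R₀) * Real.exp (-c * t) := by ring
  -- geometric sum bound
  have hgeom : ∑ t ∈ Finset.range (T + 1), Real.exp (-c * t)
      ≤ 1 / (1 - Real.exp (-c)) := by
    have hrw : ∀ t : ℕ, Real.exp (-c * t) = (Real.exp (-c)) ^ t := fun t => by
      rw [← Real.exp_nat_mul, mul_comm]
    simp_rw [hrw]
    rw [geom_sum_eq (ne_of_lt hx1)]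
    rw [show (Real.exp (-c) ^ (T + 1) - 1) / (Real.exp (-c) - 1)
        = (1 - Real.exp (-c) ^ (T + 1)) / (1 - Real.exp (-c)) by rw [← neg_div_neg_eq]; ring_nf]
    gcongr
    · linarith [pow_nonneg hx0.le (T + 1)]
  -- put it together
  have hsum : eNorm (η • ∑ t ∈ Finset.range (T + 1),
        ((J' (θt₁ t))ᵀ * J (θ₁ t) - (J' (θt₂ t))ᵀ * J (θ₂ t)).mulVec (r t))
      ≤ η * ((2 * K ^ 2 * D * Real.sqrt n * R₀) * (1 / (1 - Real.exp (-c)))) := by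
    rw [eNorm_smul', abs_of_pos hηpos]
    have h1 := eNorm_sum_le (Finset.range (T + 1))
      (fun t => ((J' (θt₁ t))ᵀ * J (θ₁ t) - (J' (θt₂ t))ᵀ * J (θ₂ t)).mulVec (r t))
    have h2 : ∑ t ∈ Finset.range (T + 1),
        eNorm (((J' (θt₁ t))ᵀ * J (θ₁ t) - (J' (θt₂ t))ᵀ * J (θ₂ t)).mulVec (r t))
        ≤ (2 * K ^ 2 * D * Real.sqrt n * R₀) * (1 / (1 - Real.exp (-c))) := by
      calc _ ≤ ∑ t ∈ Finset.range (T + 1),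
            (2 * K ^ 2 * D * Real.sqrt n * R₀) * Real.exp (-c * t) :=
            Finset.sum_le_sum fun t _ => hterm t
        _ = (2 * K ^ 2 * D * Real.sqrt n * R₀) * ∑ t ∈ Finset.range (T + 1),
            Real.exp (-c * t) := by rw [Finset.mul_sum]
        _ ≤ (2 * K ^ 2 * D * Real.sqrt n * R₀) * (1 / (1 - Real.exp (-c))) := by
            apply mul_le_mul_of_nonneg_left hgeom (by positivity)
    exact mul_le_mul_of_nonneg_left (le_trans h1 h2) hηpos.le
  refine le_trans hsum (le_of_eq ?_)
  rw [hη]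
  have hns : Real.sqrt n * Real.sqrt n = n := Real.mul_self_sqrt hn.le
  have h1e : (1:ℝ) - Real.exp (-c) > 0 := by linarith
  field_simp
  linear_combination (4 * D * R₀) * hns
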